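/- (Karamata, ρ = 0 case) Let u: [0,∞) → [0,∞), ℓ slowly varying at infinity, p₀ ∈ P_r. If lim_{n→∞} r^n z · u(r^n z)/ℓ(r^n z) = p₀(z) at all continuity points z of p₀, and 0 < liminf_{x→∞} x u(x)/ℓ(x) ≤ limsup_{x→∞} x u(x)/ℓ(x) < ∞, then U(x) = ∫_0^x u(y) dy is slowly varying at infinity and lim_{x→∞} U(x)/ℓ(x) = ∞. -/

import Mathlib

open Filter Set Real

/-- `p ∈ P_r`: positive, bounded, right-continuous, bounded away from `0` on `[1,r]`,
and logarithmically periodic with period `r`. -/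
def MemP (r : ℝ) (p : ℝ → ℝ) : Prop :=
  (∀ x > (0:ℝ), 0 < p x) ∧
  (∃ M : ℝ, ∀ x > (0:ℝ), p x ≤ M) ∧
  (∀ x > (0:ℝ), ContinuousWithinAt p (Set.Ici x) x) ∧
  (∃ c > (0:ℝ), ∀ x ∈ Set.Icc (1:ℝ) r, c ≤ p x) ∧
  (∀ x > (0:ℝ), p (x * r) = p x)

/-- `ℓ` is slowly varying at infinity (and eventually positive). -/
def SlowlyVarying (l : ℝ → ℝ) : Prop :=
  (∀ᶠ x in Filter.atTop, 0 < l x) ∧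
  ∀ lam > (0:ℝ),
    Filter.Tendsto (fun x : ℝ => l (lam * x) / l x) Filter.atTop (nhds 1)

/-- `f ∈ RL(p, r, ρ)` with slowly varying part `ℓ`:
`f(x rⁿ)/((x rⁿ)^ρ ℓ(x rⁿ)) → p(x)` at every continuity point `x > 0` of `p`. -/
def MemRL (f : ℝ → ℝ) (p : ℝ → ℝ) (r ρ : ℝ) (l : ℝ → ℝ) : Prop :=
  ∀ x > (0:ℝ), ContinuousAt p x →
    Filter.Tendsto (fun n : ℕ => f (x * r^n) / ((x * r^n) ^ ρ * l (x * r^n)))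
      Filter.atTop (nhds (p x))

/-- `f` is ultimately monotone: monotone (in either direction) on some `[x₀, ∞)`. -/
def UltimatelyMonotone (f : ℝ → ℝ) : Prop :=
  ∃ x₀ : ℝ, MonotoneOn f (Set.Ici x₀) ∨ AntitoneOn f (Set.Ici x₀)

section Aux
open MeasureTheory
open scoped ENNReal

private lemma ouct (h : ℝ → ℝ) (hmeas : Measurable h) (B U : ℝ) (hU : 0 < U)
    (hB : ∀ v : ℝ, ∀ᶠ t in Filter.atTop, |h (t + v) - h t| ≤ B) :
    ∃ K : ℝ, ∀ᶠ t in Filter.atTop, ∀ v ∈ Set.Icc (0:ℝ) U, |h (t + v) - h t| ≤ K := by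
  by_contra hcon
  push_neg at hcon
  -- extract sequences t n ≥ n, v n ∈ [0,U] with n < |h (t n + v n) - h (t n)|
  have H : ∀ n : ℕ, ∃ t, (n:ℝ) ≤ t ∧ ∃ v ∈ Set.Icc (0:ℝ) U,
      (n:ℝ) < |h (t + v) - h t| := by
    intro n
    have := hcon (n:ℝ)
    have := Filter.frequently_atTop.1 this (n:ℝ)
    obtain ⟨t, ht, hv⟩ := this
    obtain ⟨v, hv1, hv2⟩ := hv
    exact ⟨t, ht, v, hv1, hv2⟩
  choose t ht v hv hgt using H
  -- the two families of "good" sets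
  set T : ℕ → Set ℝ := fun n =>
    Set.Icc 0 (3*U) ∩ ⋂ (k : ℕ), ⋂ (_ : n ≤ k), {w | |h (t k + w) - h (t k)| ≤ B} with hT
  set S : ℕ → Set ℝ := fun n =>
    Set.Icc 0 (2*U) ∩ ⋂ (k : ℕ), ⋂ (_ : n ≤ k), {w | |h (t k + v k + w) - h (t k + v k)| ≤ B}
    with hS
  have hmeasw : ∀ a : ℝ, Measurable (fun w => |h (a + w) - h a|) := fun a =>
    ((hmeas.comp (measurable_const_add a)).sub measurable_const).abs
  have hTmeas : ∀ n, MeasurableSet (T n) := by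
    intro n
    exact measurableSet_Icc.inter (MeasurableSet.iInter fun k => MeasurableSet.iInter fun _ =>
      measurableSet_le (hmeasw (t k)) measurable_const)
  have hSmeas : ∀ n, MeasurableSet (S n) := by
    intro n
    exact measurableSet_Icc.inter (MeasurableSet.iInter fun k => MeasurableSet.iInter fun _ =>
      measurableSet_le (hmeasw (t k + v k)) measurable_const)
  -- coverage
  have hcover : ∀ (c : ℕ → ℝ), (∀ k : ℕ, (k:ℝ) ≤ c k) → ∀ w : ℝ,
      ∃ n : ℕ, ∀ k ≥ n, |h (c k + w) - h (c k)| ≤ B := by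
    intro c hc w
    obtain ⟨a, ha⟩ := Filter.eventually_atTop.1 (hB w)
    refine ⟨⌈a⌉₊, fun k hk => ?_⟩
    exact ha (c k) (le_trans (le_trans (Nat.le_ceil a) (by exact_mod_cast hk)) (hc k))
  have hTcover : Set.Icc (0:ℝ) (3*U) ⊆ ⋃ n, T n := by
    intro w hw
    obtain ⟨n, hn⟩ := hcover t ht w
    exact Set.mem_iUnion.2 ⟨n, hw, Set.mem_iInter.2 fun k => Set.mem_iInter.2 fun hk => hn k hk⟩
  have hScover : Set.Icc (0:ℝ) (2*U) ⊆ ⋃ n, S n := by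
    intro w hw
    have hc : ∀ k : ℕ, (k:ℝ) ≤ t k + v k := fun k => le_trans (ht k) (le_add_of_nonneg_right (hv k).1)
    obtain ⟨n, hn⟩ := hcover (fun k => t k + v k) hc w
    exact Set.mem_iUnion.2 ⟨n, hw, Set.mem_iInter.2 fun k => Set.mem_iInter.2 fun hk => hn k hk⟩
  -- monotone
  have hTmono : Monotone T := by
    intro a b hab
    refine Set.inter_subset_inter_right _ ?_
    intro w hw
    exact Set.mem_iInter.2 fun k => Set.mem_iInter.2 fun hk =>
      Set.mem_iInter.1 (Set.mem_iInter.1 hw k) (le_trans hab hk)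
  have hSmono : Monotone S := by
    intro a b hab
    refine Set.inter_subset_inter_right _ ?_
    intro w hw
    exact Set.mem_iInter.2 fun k => Set.mem_iInter.2 fun hk =>
      Set.mem_iInter.1 (Set.mem_iInter.1 hw k) (le_trans hab hk)
  -- complements tend to measure zero
  have key : ∀ (G : ℕ → Set ℝ) (b : ℝ), (∀ n, MeasurableSet (G n)) → Monotone G →
      (Set.Icc (0:ℝ) b ⊆ ⋃ n, G n) → (∀ n, G n ⊆ Set.Icc (0:ℝ) b) →
      ∃ N, volume (Set.Icc (0:ℝ) b \ G N) < ENNReal.ofReal (U/2) := by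
    intro G b hGm hGmono hGcov hGsub
    have hanti : Antitone (fun n => Set.Icc (0:ℝ) b \ G n) := fun a b' hab =>
      Set.diff_subset_diff_right (hGmono hab)
    have hiInter : (⋂ n, Set.Icc (0:ℝ) b \ G n) = ∅ := by
      rw [Set.eq_empty_iff_forall_notMem]
      intro w hw
      have h1 : w ∈ Set.Icc (0:ℝ) b := (Set.mem_iInter.1 hw 0).1
      obtain ⟨n, hn⟩ := Set.mem_iUnion.1 (hGcov h1)
      exact (Set.mem_iInter.1 hw n).2 hn
    have hfin : volume (Set.Icc (0:ℝ) b \ G 0) ≠ ⊤ :=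
      ne_top_of_le_ne_top (by simp [Real.volume_Icc]) (measure_mono Set.diff_subset)
    have := tendsto_measure_iInter_atTop
      (fun n => (measurableSet_Icc.diff (hGm n)).nullMeasurableSet) hanti ⟨0, hfin⟩
    rw [hiInter] at this
    simp only [measure_empty] at this
    have hpos : (0:ℝ≥0∞) < ENNReal.ofReal (U/2) := by
      simp [ENNReal.ofReal_pos]; linarith
    obtain ⟨N, hN⟩ := (this.eventually_lt_const hpos).exists
    exact ⟨N, hN⟩
  obtain ⟨N₁, hN₁⟩ := key T (3*U) hTmeas hTmono hTcover (fun n => Set.inter_subset_left)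
  obtain ⟨N₂, hN₂⟩ := key S (2*U) hSmeas hSmono hScover (fun n => Set.inter_subset_left)
  -- choose k large
  set k : ℕ := max (max N₁ N₂) (⌈2*B⌉₊ + 1) with hk
  have hkN₁ : N₁ ≤ k := le_trans (le_max_left _ _) (le_max_left _ _)
  have hkN₂ : N₂ ≤ k := le_trans (le_max_right _ _) (le_max_left _ _)
  have hkB : 2*B < (k:ℝ) := by
    have h1 : (⌈2*B⌉₊ + 1 : ℕ) ≤ k := le_max_right _ _
    have : 2*B ≤ (⌈2*B⌉₊ : ℝ) := Nat.le_ceil _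
    have h2 : ((⌈2*B⌉₊ + 1 : ℕ) : ℝ) ≤ (k:ℝ) := by exact_mod_cast h1
    push_cast at h2
    linarith
  -- intersection argument
  set I : Set ℝ := Set.Icc (v k) (v k + 2*U) with hI
  have hvk0 : 0 ≤ v k := (hv k).1
  have hvkU : v k ≤ U := (hv k).2
  have hIsub : I ⊆ Set.Icc 0 (3*U) := fun w hw => ⟨le_trans hvk0 hw.1, by
    have := hw.2; linarith⟩
  set A₂ : Set ℝ := (fun w => w + (-(v k))) ⁻¹' (S N₂) with hA₂
  -- nonemptiness of T N₁ ∩ A₂ ∩ I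
  have hne : (T N₁ ∩ A₂ ∩ I).Nonempty := by
    by_contra hemp
    rw [Set.not_nonempty_iff_eq_empty] at hemp
    have hsub : I ⊆ (Set.Icc (0:ℝ) (3*U) \ T N₁) ∪
        ((fun w => w + (-(v k))) ⁻¹' (Set.Icc (0:ℝ) (2*U) \ S N₂)) := by
      intro w hw
      by_cases h1 : w ∈ T N₁
      · right
        have h2 : w ∉ A₂ := fun h2 =>
          (Set.eq_empty_iff_forall_notMem.1 hemp w) ⟨⟨h1, h2⟩, hw⟩
        refine Set.mem_preimage.2 ⟨⟨?_, ?_⟩, h2⟩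
        · show (0:ℝ) ≤ w + -v k
          linarith [hw.1]
        · show w + -v k ≤ 2*U
          linarith [hw.2]
      · exact Or.inl ⟨hIsub hw, h1⟩
    have hmeasI : volume I = ENNReal.ofReal (2*U) := by
      rw [hI, Real.volume_Icc]; ring_nf
    have hb2 : volume ((fun w => w + (-(v k))) ⁻¹' (Set.Icc (0:ℝ) (2*U) \ S N₂))
        = volume (Set.Icc (0:ℝ) (2*U) \ S N₂) :=
      measure_preimage_add_right volume _ _
    have := measure_mono (μ := (volume : MeasureTheory.Measure ℝ)) hsub
    have hle := le_trans this (measure_union_le _ _)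
    rw [hmeasI, hb2] at hle
    have : ENNReal.ofReal (2*U) < ENNReal.ofReal (U/2) + ENNReal.ofReal (U/2) := by
      exact lt_of_le_of_lt hle (ENNReal.add_lt_add hN₁ hN₂)
    rw [← ENNReal.ofReal_add (by linarith) (by linarith)] at this
    have := (ENNReal.ofReal_lt_ofReal_iff (by linarith)).1 this
    linarith
  obtain ⟨w, ⟨hwT, hwA⟩, hwI⟩ := hne
  -- contradiction
  have h1 : |h (t k + w) - h (t k)| ≤ B := by
    have := hwT.2
    exact Set.mem_iInter.1 (Set.mem_iInter.1 this k) hkN₁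
  have h2 : |h (t k + v k + (w - v k)) - h (t k + v k)| ≤ B := by
    have hw2 : w + (-(v k)) ∈ S N₂ := hwA
    have := hw2.2
    have := Set.mem_iInter.1 (Set.mem_iInter.1 this k) hkN₂
    simpa [sub_eq_add_neg] using this
  have heq : t k + v k + (w - v k) = t k + w := by ring
  rw [heq] at h2
  have : |h (t k + v k) - h (t k)| ≤ 2*B := by
    have := abs_sub_le (h (t k + v k)) (h (t k + w)) (h (t k))
    rw [abs_sub_comm (h (t k + v k)) (h (t k + w))] at this
    linarith [this, h1, h2]
  linarith [hgt k, this]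

private lemma unif_bound (m l : ℝ → ℝ) (hmm : Measurable m) (c C X₀ : ℝ) (hc : 0 < c) (hC : 0 < C)
    (hbd : ∀ x ≥ X₀, 0 < l x ∧ c * l x ≤ m x ∧ m x ≤ C * l x)
    (hsl : ∀ lam > (0:ℝ), Filter.Tendsto (fun x => l (lam * x) / l x) Filter.atTop (nhds 1))
    (Λ : ℝ) (hΛ : 1 ≤ Λ) :
    ∃ K > (0:ℝ), ∀ᶠ x in Filter.atTop,
      ∀ s ∈ Set.Icc x (Λ * x), m s ≤ K * m x ∧ m x ≤ K * m s := by
  have hCc : 0 < C / c := div_pos hC hc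
  set B : ℝ := Real.log (C / c) + 1 with hBdef
  have hmpos : ∀ x ≥ X₀, 0 < m x := fun x hx =>
    lt_of_lt_of_le (mul_pos hc (hbd x hx).1) (hbd x hx).2.1
  set h : ℝ → ℝ := fun t => Real.log (m (Real.exp t)) with hhdef
  have hmeas : Measurable h := Real.measurable_log.comp (hmm.comp Real.measurable_exp)
  have hBbound : ∀ v : ℝ, ∀ᶠ t in atTop, |h (t + v) - h t| ≤ B := by
    intro v
    have he1 : Real.exp (-1) < 1 := by
      have := Real.exp_lt_exp.2 (show (-1:ℝ) < 0 by norm_num); simpa using this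
    have he2 : (1:ℝ) < Real.exp 1 := by
      have := Real.exp_lt_exp.2 (show (0:ℝ) < 1 by norm_num); simpa using this
    have h1 : ∀ᶠ x in atTop, l (Real.exp v * x) / l x ∈ Set.Ioo (Real.exp (-1)) (Real.exp 1) :=
      (hsl (Real.exp v) (Real.exp_pos v)).eventually (Ioo_mem_nhds he1 he2)
    have h2 : ∀ᶠ x in atTop, x ≥ X₀ := eventually_ge_atTop X₀
    have h3 : ∀ᶠ x in atTop, Real.exp v * x ≥ X₀ :=
      (Filter.Tendsto.const_mul_atTop (Real.exp_pos v) tendsto_id).eventually_ge_atTop X₀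
    filter_upwards [Real.tendsto_exp_atTop.eventually ((h1.and h2).and h3)] with t ht
    obtain ⟨⟨hio, hx0⟩, hy0⟩ := ht
    set x := Real.exp t with hxdef
    set y := Real.exp v * x with hy
    have hyx : Real.exp (t + v) = y := by rw [add_comm, Real.exp_add]
    have hlx := hbd x hx0
    have hly := hbd y hy0
    have hmx := hmpos x hx0
    have hmy := hmpos y hy0
    have hub : m y / m x ≤ (C/c) * Real.exp 1 := by
      have step1 : m y / m x ≤ (C * l y) / (c * l x) :=
        div_le_div₀ (mul_nonneg (le_of_lt hC) (le_of_lt hly.1)) hly.2.2 (mul_pos hc hlx.1) hlx.2.1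
      have step2 : (C * l y) / (c * l x) = (C/c) * (l y / l x) := by
        rw [div_mul_div_comm]
      have step3 : (C/c) * (l y / l x) ≤ (C/c) * Real.exp 1 :=
        mul_le_mul_of_nonneg_left (le_of_lt hio.2) (le_of_lt hCc)
      calc m y / m x ≤ (C * l y) / (c * l x) := step1
        _ = (C/c) * (l y / l x) := step2
        _ ≤ (C/c) * Real.exp 1 := step3
    have hlb : ((C/c) * Real.exp 1)⁻¹ ≤ m y / m x := by
      have step1 : (c * l y) / (C * l x) ≤ m y / m x :=
        div_le_div₀ (le_of_lt hmy) hly.2.1 hmx hlx.2.2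
      have step2 : (c * l y) / (C * l x) = (c/C) * (l y / l x) := by
        rw [div_mul_div_comm]
      have step3 : (c/C) * Real.exp (-1) ≤ (c/C) * (l y / l x) :=
        mul_le_mul_of_nonneg_left (le_of_lt hio.1) (le_of_lt (div_pos hc hC))
      have step4 : ((C/c) * Real.exp 1)⁻¹ = (c/C) * Real.exp (-1) := by
        rw [mul_inv, Real.exp_neg, inv_div]
      rw [step4]
      calc (c/C) * Real.exp (-1) ≤ (c/C) * (l y / l x) := step3
        _ = (c * l y) / (C * l x) := step2.symm
        _ ≤ m y / m x := step1
    have hkey : h (t + v) - h t = Real.log (m y / m x) := by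
      show Real.log (m (Real.exp (t+v))) - Real.log (m (Real.exp t)) = _
      rw [hyx, ← hxdef, Real.log_div (ne_of_gt hmy) (ne_of_gt hmx)]
    rw [hkey]
    have hBpos : Real.log ((C/c) * Real.exp 1) = B := by
      rw [Real.log_mul (ne_of_gt hCc) (ne_of_gt (Real.exp_pos 1)), Real.log_exp]
    rw [abs_le]
    constructor
    · have : Real.log (((C/c) * Real.exp 1)⁻¹) ≤ Real.log (m y / m x) :=
        (Real.log_le_log_iff (by positivity) (div_pos hmy hmx)).2 hlb
      rwa [Real.log_inv, hBpos] at this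
    · have : Real.log (m y / m x) ≤ Real.log ((C/c) * Real.exp 1) :=
        (Real.log_le_log_iff (div_pos hmy hmx) (by positivity)).2 hub
      rwa [hBpos] at this
  have hU : (0:ℝ) < Real.log Λ + 1 := by
    have := Real.log_nonneg hΛ; linarith
  obtain ⟨K', hK'⟩ := ouct h hmeas B (Real.log Λ + 1) hU hBbound
  refine ⟨Real.exp K', Real.exp_pos K', ?_⟩
  filter_upwards [Real.tendsto_log_atTop.eventually hK',
    eventually_ge_atTop (max X₀ 1)] with x hx1 hx2
  have hxX₀ : X₀ ≤ x := le_trans (le_max_left _ _) hx2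
  have hx0 : (0:ℝ) < x := lt_of_lt_of_le one_pos (le_trans (le_max_right _ _) hx2)
  intro s hs
  have hs0 : (0:ℝ) < s := lt_of_lt_of_le hx0 hs.1
  have hsX₀ : X₀ ≤ s := le_trans hxX₀ hs.1
  have hmx := hmpos x hxX₀
  have hms := hmpos s hsX₀
  have hdiv1 : (1:ℝ) ≤ s / x := (one_le_div hx0).2 hs.1
  have hdiv2 : s / x ≤ Λ := (div_le_iff₀ hx0).2 (by linarith [hs.2])
  set v : ℝ := Real.log (s / x) with hvdef
  have hv1 : 0 ≤ v := Real.log_nonneg hdiv1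
  have hv2 : v ≤ Real.log Λ + 1 := by
    have : v ≤ Real.log Λ := (Real.log_le_log_iff (by positivity) (by positivity)).2 hdiv2
    linarith
  have := hx1 v ⟨hv1, hv2⟩
  have hexp : Real.exp (Real.log x + v) = s := by
    rw [Real.exp_add, Real.exp_log hx0, Real.exp_log (by positivity)]
    field_simp
  have habs : |Real.log (m s) - Real.log (m x)| ≤ K' := by
    have h5 : h (Real.log x + v) = Real.log (m s) := by
      show Real.log (m (Real.exp (Real.log x + v))) = _
      rw [hexp]
    have h6 : h (Real.log x) = Real.log (m x) := by
      show Real.log (m (Real.exp (Real.log x))) = _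
      rw [Real.exp_log hx0]
    rwa [h5, h6] at this
  rw [abs_le] at habs
  constructor
  · have : m s = Real.exp (Real.log (m s)) := (Real.exp_log hms).symm
    rw [this]
    have : Real.log (m s) ≤ K' + Real.log (m x) := by linarith [habs.2]
    calc Real.exp (Real.log (m s)) ≤ Real.exp (K' + Real.log (m x)) :=
          Real.exp_le_exp.2 this
      _ = Real.exp K' * m x := by rw [Real.exp_add, Real.exp_log hmx]
  · have : m x = Real.exp (Real.log (m x)) := (Real.exp_log hmx).symm
    rw [this]
    have : Real.log (m x) ≤ K' + Real.log (m s) := by linarith [habs.1]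
    calc Real.exp (Real.log (m x)) ≤ Real.exp (K' + Real.log (m s)) :=
          Real.exp_le_exp.2 this
      _ = Real.exp K' * m s := by rw [Real.exp_add, Real.exp_log hms]

end Aux

open MeasureTheory in
/-- Karamata theorem, `ρ = 0` case. -/
theorem statement_15 (u p₀ : ℝ → ℝ) (r : ℝ) (l : ℝ → ℝ)
    (hr : 1 < r) (hl : SlowlyVarying l)
    (hu0 : ∀ x ≥ (0:ℝ), 0 ≤ u x) (hum : Measurable u)
    (huint : ∀ x : ℝ, MeasureTheory.IntegrableOn u (Set.Icc 0 x))
    (hp₀ : MemP r p₀)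
    (hlim : ∀ z > (0:ℝ), ContinuousAt p₀ z →
      Filter.Tendsto
        (fun n : ℕ => (r^n * z) * u (r^n * z) / l (r^n * z))
        Filter.atTop (nhds (p₀ z)))
    (hlb : ∃ c > (0:ℝ), ∀ᶠ x in Filter.atTop, c ≤ x * u x / l x)
    (hub : ∃ C : ℝ, ∀ᶠ x in Filter.atTop, x * u x / l x ≤ C) :
    (∀ lam > (0:ℝ),
      Filter.Tendsto
        (fun x : ℝ => (∫ y in (0:ℝ)..(lam * x), u y) / ∫ y in (0:ℝ)..x, u y)
        Filter.atTop (nhds 1)) ∧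
    Filter.Tendsto (fun x : ℝ => (∫ y in (0:ℝ)..x, u y) / l x)
      Filter.atTop Filter.atTop := by
  obtain ⟨c, hc, hlbc⟩ := hlb
  obtain ⟨C, hubC⟩ := hub
  set m : ℝ → ℝ := fun x => x * u x with hmdef
  have hmm : Measurable m := measurable_id.mul hum
  have hsetup : ∀ᶠ x in atTop, 0 < l x ∧ c * l x ≤ m x ∧ m x ≤ C * l x := by
    filter_upwards [hl.1, hlbc, hubC] with x h1 h2 h3
    exact ⟨h1, (le_div_iff₀ h1).1 h2, (div_le_iff₀ h1).1 h3⟩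
  obtain ⟨X₀', hX₀'⟩ := Filter.eventually_atTop.1 hsetup
  set X₀ : ℝ := max X₀' 1 with hX₀def
  have hX₀1 : (1:ℝ) ≤ X₀ := le_max_right _ _
  have hbd : ∀ x ≥ X₀, 0 < l x ∧ c * l x ≤ m x ∧ m x ≤ C * l x := fun x hx =>
    hX₀' x (le_trans (le_max_left _ _) hx)
  have hC0 : 0 < C := by
    obtain ⟨h1, h2, h3⟩ := hbd X₀ le_rfl
    nlinarith
  have hmpos : ∀ x ≥ X₀, 0 < m x := fun x hx =>
    lt_of_lt_of_le (mul_pos hc (hbd x hx).1) (hbd x hx).2.1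
  -- interval integrability
  have hII : ∀ a b : ℝ, 0 ≤ a → a ≤ b → IntervalIntegrable u volume a b := by
    intro a b ha hab
    rw [intervalIntegrable_iff_integrableOn_Ioc_of_le hab]
    exact (huint b).mono_set (fun t ht => ⟨le_trans ha (le_of_lt ht.1), ht.2⟩)
  set U' : ℝ → ℝ := fun x => ∫ y in (0:ℝ)..x, u y with hU'def
  have hadd : ∀ a b : ℝ, 0 ≤ a → a ≤ b → U' b = U' a + ∫ y in a..b, u y := by
    intro a b ha hab
    rw [hU'def]
    exact (intervalIntegral.integral_add_adjacent_intervals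
      (hII 0 a le_rfl ha) (hII a b ha hab)).symm
  -- u t = m t / t
  have huval : ∀ t : ℝ, t ≠ 0 → u t = m t / t := by
    intro t ht
    rw [hmdef]
    field_simp
  -- upper window bound
  have hwin_up : ∀ (K lam x : ℝ), 0 < K → 1 ≤ lam → X₀ ≤ x →
      (∀ s ∈ Set.Icc x (lam * x), m s ≤ K * m x) →
      (∫ y in x..(lam * x), u y) ≤ K * m x * Real.log lam := by
    intro K lam x hK hlam hx hKs
    have hx0 : (0:ℝ) < x := lt_of_lt_of_le one_pos (le_trans hX₀1 hx)
    have hxb : x ≤ lam * x := le_mul_of_one_le_left (le_of_lt hx0) hlam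
    have hsub : Set.uIcc x (lam * x) ⊆ {(0:ℝ)}ᶜ := by
      rw [Set.uIcc_of_le hxb]
      intro t ht
      exact ne_of_gt (lt_of_lt_of_le hx0 ht.1)
    have hint2 : IntervalIntegrable (fun t => K * m x * t⁻¹) volume x (lam * x) :=
      (continuousOn_const.mul (continuousOn_inv₀.mono hsub)).intervalIntegrable
    have hpt : ∀ t ∈ Set.Icc x (lam * x), u t ≤ K * m x * t⁻¹ := by
      intro t ht
      have ht0 : (0:ℝ) < t := lt_of_lt_of_le hx0 ht.1
      rw [huval t (ne_of_gt ht0)]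
      rw [div_eq_mul_inv]
      exact mul_le_mul_of_nonneg_right (hKs t ht) (le_of_lt (inv_pos.2 ht0))
    calc (∫ y in x..(lam * x), u y) ≤ ∫ y in x..(lam * x), K * m x * y⁻¹ :=
          intervalIntegral.integral_mono_on hxb (hII x (lam*x) (le_of_lt hx0) hxb) hint2 hpt
      _ = K * m x * ∫ y in x..(lam * x), y⁻¹ := intervalIntegral.integral_const_mul _ _
      _ = K * m x * Real.log lam := by
          rw [integral_inv_of_pos hx0 (lt_of_lt_of_le hx0 hxb),
            mul_div_cancel_right₀ lam (ne_of_gt hx0)]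
  -- lower window bound (factor 2 windows)
  have hwin_lo : ∀ (K y : ℝ), 0 < K → X₀ ≤ y →
      (∀ s ∈ Set.Icc y (2 * y), m y ≤ K * m s) →
      m y / K * Real.log 2 ≤ ∫ t in y..(2*y), u t := by
    intro K y hK hy hKs
    have hy0 : (0:ℝ) < y := lt_of_lt_of_le one_pos (le_trans hX₀1 hy)
    have hyb : y ≤ 2 * y := by linarith
    have hsub : Set.uIcc y (2 * y) ⊆ {(0:ℝ)}ᶜ := by
      rw [Set.uIcc_of_le hyb]
      intro t ht
      exact ne_of_gt (lt_of_lt_of_le hy0 ht.1)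
    have hint2 : IntervalIntegrable (fun t => m y / K * t⁻¹) volume y (2 * y) :=
      (continuousOn_const.mul (continuousOn_inv₀.mono hsub)).intervalIntegrable
    have hpt : ∀ t ∈ Set.Icc y (2 * y), m y / K * t⁻¹ ≤ u t := by
      intro t ht
      have ht0 : (0:ℝ) < t := lt_of_lt_of_le hy0 ht.1
      rw [huval t (ne_of_gt ht0), div_eq_mul_inv (m t)]
      refine mul_le_mul_of_nonneg_right ?_ (le_of_lt (inv_pos.2 ht0))
      rw [div_le_iff₀ hK]
      calc m y ≤ K * m t := hKs t ht
        _ = m t * K := mul_comm _ _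
    calc m y / K * Real.log 2
        = m y / K * ∫ t in y..(2*y), t⁻¹ := by
          rw [integral_inv_of_pos hy0 (by linarith),
            mul_div_cancel_right₀ (2:ℝ) (ne_of_gt hy0)]
      _ = ∫ t in y..(2*y), m y / K * t⁻¹ := (intervalIntegral.integral_const_mul _ _).symm
      _ ≤ ∫ t in y..(2*y), u t :=
          intervalIntegral.integral_mono_on hyb hint2 (hII y (2*y) (le_of_lt hy0) hyb) hpt
  -- MAIN PART 2 : U' / l → ∞
  have key2 : Filter.Tendsto (fun x : ℝ => U' x / l x) Filter.atTop Filter.atTop := by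
    rw [tendsto_atTop]
    intro A
    obtain ⟨K, hK0, hKev⟩ := unif_bound m l hmm c C X₀ hc hC0 hbd hl.2 2 one_le_two
    have hlog2 : (0:ℝ) < Real.log 2 := Real.log_pos one_lt_two
    set β : ℝ := c * Real.log 2 / K with hβdef
    have hβ : 0 < β := div_pos (mul_pos hc hlog2) hK0
    set k : ℕ := ⌈2 * A / β⌉₊ + 1 with hkdef
    have hkA : 2 * A / β ≤ (k : ℝ) := le_trans (Nat.le_ceil _) (by rw [hkdef]; push_cast; linarith)
    have hAkβ : A ≤ (k:ℝ) * β / 2 := by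
      rw [div_le_iff₀ hβ] at hkA
      linarith
    -- eventual facts
    have E1 : ∀ᶠ x : ℝ in atTop, X₀ * 2^k ≤ x := eventually_ge_atTop _
    have E2 : ∀ᶠ x : ℝ in atTop, ∀ j ∈ Finset.range k, l x / 2 ≤ l (x / 2^(j+1)) := by
      rw [Filter.eventually_all_finset]
      intro j _
      have hpow : (0:ℝ) < ((2:ℝ)^(j+1))⁻¹ := by positivity
      have h1 := (hl.2 (((2:ℝ)^(j+1))⁻¹) hpow).eventually
        (eventually_ge_nhds (show (1:ℝ)/2 < 1 by norm_num))
      filter_upwards [h1, hl.1] with x hx hlx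
      rw [inv_mul_eq_div] at hx
      rw [le_div_iff₀ hlx] at hx
      linarith
    have E3 : ∀ᶠ x : ℝ in atTop, ∀ j ∈ Finset.range k,
        ∀ s ∈ Set.Icc (x / 2^(j+1)) (2 * (x / 2^(j+1))),
          m s ≤ K * m (x / 2^(j+1)) ∧ m (x / 2^(j+1)) ≤ K * m s := by
      rw [Filter.eventually_all_finset]
      intro j _
      have ht : Filter.Tendsto (fun x : ℝ => x / 2^(j+1)) atTop atTop :=
        Filter.Tendsto.atTop_div_const (by positivity) tendsto_id
      exact ht.eventually hKev
    filter_upwards [E1, E2, E3, hl.1] with x hx1 hx2 hx3 hx4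
    have h2k1 : (1:ℝ) ≤ 2^k := one_le_pow₀ one_le_two
    have hx0 : (0:ℝ) < x := by nlinarith
    have hyX : ∀ j : ℕ, j ≤ k → X₀ ≤ x / 2^j := by
      intro j hj
      rw [le_div_iff₀ (by positivity)]
      calc X₀ * 2^j ≤ X₀ * 2^k :=
            mul_le_mul_of_nonneg_left (pow_le_pow_right₀ one_le_two hj) (by linarith)
        _ ≤ x := hx1
    set γ : ℝ := c * (l x / 2) / K * Real.log 2 with hγdef
    have hwin : ∀ j : ℕ, j < k → γ ≤ U' (x / 2^j) - U' (x / 2^(j+1)) := by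
      intro j hj
      set y : ℝ := x / 2^(j+1) with hydef
      have hyX₀ : X₀ ≤ y := hyX (j+1) (Nat.succ_le_of_lt hj)
      have hy0 : (0:ℝ) < y := lt_of_lt_of_le one_pos (le_trans hX₀1 hyX₀)
      have h2y : x / 2^j = 2 * y := by
        rw [hydef, pow_succ]
        field_simp
      have hKs : ∀ s ∈ Set.Icc y (2*y), m y ≤ K * m s := fun s hs =>
        (hx3 j (Finset.mem_range.2 hj) s hs).2
      have hlow := hwin_lo K y hK0 hyX₀ hKs
      have hU'eq : U' (2*y) = U' y + ∫ t in y..(2*y), u t :=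
        hadd y (2*y) (le_of_lt hy0) (by linarith)
      have hly : l x / 2 ≤ l y := hx2 j (Finset.mem_range.2 hj)
      have hmy : c * (l x / 2) ≤ m y :=
        le_trans (mul_le_mul_of_nonneg_left hly (le_of_lt hc)) (hbd y hyX₀).2.1
      have hstep1 : γ ≤ m y / K * Real.log 2 := by
        rw [hγdef]
        exact mul_le_mul_of_nonneg_right ((div_le_div_iff_of_pos_right hK0).2 hmy)
          (le_of_lt hlog2)
      rw [h2y, hU'eq]
      linarith
    have hstep : ∀ j : ℕ, j ≤ k → U' (x / 2^j) + (j:ℝ) * γ ≤ U' x := by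
      intro j
      induction j with
      | zero => intro _; simp
      | succ i ih =>
        intro hik
        have hik' : i < k := Nat.lt_of_succ_le hik
        have h1 := hwin i hik'
        have h2 := ih (le_of_lt hik')
        push_cast
        push_cast at h2
        linarith
    have hfin : (k:ℝ) * γ ≤ U' x := by
      have h1 := hstep k le_rfl
      have h2 : 0 ≤ U' (x / 2^k) :=
        intervalIntegral.integral_nonneg (by positivity) (fun t ht => hu0 t ht.1)
      linarith
    show A ≤ U' x / l x
    rw [le_div_iff₀ hx4]
    calc A * l x ≤ ((k:ℝ) * β / 2) * l x := mul_le_mul_of_nonneg_right hAkβ (le_of_lt hx4)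
      _ = (k:ℝ) * γ := by rw [hβdef, hγdef]; field_simp
      _ ≤ U' x := hfin
  -- eventual positivity of U'
  have hU'pos : ∀ᶠ x in atTop, l x ≤ U' x ∧ 0 < l x := by
    filter_upwards [key2.eventually_ge_atTop 1, hl.1] with x h1 h2
    refine ⟨?_, h2⟩
    rw [le_div_iff₀ h2, one_mul] at h1
    exact h1
  -- MAIN PART 1 for lam ≥ 1
  have key1 : ∀ lam : ℝ, 1 ≤ lam →
      Filter.Tendsto (fun x => U' (lam * x) / U' x) Filter.atTop (nhds 1) := by
    intro lam hlam
    obtain ⟨K, hK0, hKev⟩ := unif_bound m l hmm c C X₀ hc hC0 hbd hl.2 lam hlam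
    set D : ℝ := K * C * Real.log lam with hDdef
    have hD0 : 0 ≤ D :=
      mul_nonneg (mul_nonneg (le_of_lt hK0) (le_of_lt hC0)) (Real.log_nonneg hlam)
    have hupper : Filter.Tendsto (fun x => 1 + D * (U' x / l x)⁻¹) atTop (nhds 1) := by
      have h0 : Filter.Tendsto (fun x => (U' x / l x)⁻¹) atTop (nhds 0) :=
        tendsto_inv_atTop_zero.comp key2
      have h1 := h0.const_mul D
      rw [mul_zero] at h1
      simpa using (tendsto_const_nhds (x := (1:ℝ)) (f := atTop)).add h1
    refine tendsto_of_tendsto_of_tendsto_of_le_of_le' tendsto_const_nhds hupper ?_ ?_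
    · filter_upwards [hU'pos, eventually_ge_atTop X₀] with x hx1 hx2
      have hx0 : (0:ℝ) < x := lt_of_lt_of_le one_pos (le_trans hX₀1 hx2)
      have hxb : x ≤ lam * x := le_mul_of_one_le_left (le_of_lt hx0) hlam
      have hU'x : 0 < U' x := lt_of_lt_of_le hx1.2 hx1.1
      have hmono : U' x ≤ U' (lam * x) := by
        rw [hadd x (lam*x) (le_of_lt hx0) hxb]
        have h5 : 0 ≤ ∫ y in x..(lam*x), u y :=
          intervalIntegral.integral_nonneg hxb
            (fun t ht => hu0 t (le_trans (le_of_lt hx0) ht.1))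
        linarith
      rw [le_div_iff₀ hU'x, one_mul]
      exact hmono
    · filter_upwards [hU'pos, eventually_ge_atTop X₀, hKev] with x hx1 hx2 hx3
      have hx0 : (0:ℝ) < x := lt_of_lt_of_le one_pos (le_trans hX₀1 hx2)
      have hxb : x ≤ lam * x := le_mul_of_one_le_left (le_of_lt hx0) hlam
      have hlx : 0 < l x := hx1.2
      have hU'x : 0 < U' x := lt_of_lt_of_le hlx hx1.1
      have hint := hwin_up K lam x hK0 hlam hx2 (fun s hs => (hx3 s hs).1)
      have hmC : m x ≤ C * l x := (hbd x hx2).2.2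
      have hintD : (∫ y in x..(lam*x), u y) ≤ D * l x := by
        calc (∫ y in x..(lam*x), u y) ≤ K * m x * Real.log lam := hint
          _ ≤ K * (C * l x) * Real.log lam := by
              have hlog := Real.log_nonneg hlam
              nlinarith
          _ = D * l x := by rw [hDdef]; ring
      rw [hadd x (lam*x) (le_of_lt hx0) hxb, add_div, div_self (ne_of_gt hU'x), inv_div]
      have h6 : (∫ y in x..(lam*x), u y) / U' x ≤ D * l x / U' x :=
        (div_le_div_iff_of_pos_right hU'x).2 hintD
      have h7 : D * (l x / U' x) = D * l x / U' x := (mul_div_assoc D (l x) (U' x)).symm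
      rw [h7]
      linarith
  constructor
  · intro lam hlam
    rcases le_or_gt 1 lam with h | h
    · exact key1 lam h
    · have hinvlam : 1 ≤ 1/lam := by
        rw [le_div_iff₀ hlam, one_mul]
        linarith
      have h1 := key1 (1/lam) hinvlam
      have h2 : Filter.Tendsto (fun x : ℝ => U' (1/lam * (lam * x)) / U' (lam * x))
          atTop (nhds 1) :=
        h1.comp (Filter.Tendsto.const_mul_atTop hlam tendsto_id)
      have h3 : (fun x : ℝ => U' (1/lam * (lam * x)) / U' (lam * x))
          = fun x : ℝ => U' x / U' (lam * x) := by
        funext x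
        rw [← mul_assoc, one_div, inv_mul_cancel₀ (ne_of_gt hlam), one_mul]
      rw [h3] at h2
      have h4 := h2.inv₀ one_ne_zero
      rw [inv_one] at h4
      have h5 : (fun x : ℝ => (U' x / U' (lam * x))⁻¹)
          = fun x : ℝ => U' (lam * x) / U' x := by
        funext x
        rw [inv_div]
      rw [h5] at h4
      exact h4
  · exact key2
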